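/- Let X be a real Banach space and A ⊆ X a bounded subset. Then A is uniformly weakly null if and only if A is uniformly Banach–Saks null, i.e., for every ε > 0 there exists N ∈ ℕ such that every finite subset B ⊆ A with |B| ≥ N satisfies ‖ |B|⁻¹ · Σ_{x∈B} x ‖ < ε. -/

import Mathlib

/-- A subset `A` of a real Banach space is uniformly weakly null if for every `ε > 0` there is
`N ∈ ℕ` such that `{x ∈ A : |x*(x)| > ε}` has at most `N` elements for every `x*` in the closed
unit ball of the dual. -/
def UniformlyWeaklyNull {X : Type*} [NormedAddCommGroup X] [NormedSpace ℝ X] (A : Set X) : Prop :=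
  ∀ ε : ℝ, 0 < ε → ∃ N : ℕ, ∀ f : X →L[ℝ] ℝ, ‖f‖ ≤ 1 →
    {x ∈ A | ε < |f x|}.encard ≤ (N : ℕ∞)

/-- Auxiliary: if `g` is in the unit ball of the dual, `P` a nonempty finset with `g x > ε`
for all `x ∈ P`, then the average of `P` has norm at least `ε`. -/
lemma aux_avg_lb {X : Type*} [NormedAddCommGroup X] [NormedSpace ℝ X]
    (g : X →L[ℝ] ℝ) (hg : ‖g‖ ≤ 1) (P : Finset X) (hP : P.Nonempty) {ε : ℝ}
    (hgx : ∀ x ∈ P, ε < g x) : ε ≤ ‖(P.card : ℝ)⁻¹ • ∑ x ∈ P, x‖ := by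
  have hc : (0:ℝ) < (P.card : ℝ) := by
    exact_mod_cast Finset.card_pos.mpr hP
  have h1 : (P.card : ℝ) * ε ≤ g (∑ x ∈ P, x) := by
    rw [map_sum]
    calc (P.card : ℝ) * ε = ∑ _x ∈ P, ε := by rw [Finset.sum_const, nsmul_eq_mul]
    _ ≤ ∑ x ∈ P, g x := Finset.sum_le_sum fun x hx => (hgx x hx).le
  have h2 : ε ≤ g ((P.card : ℝ)⁻¹ • ∑ x ∈ P, x) := by
    rw [map_smul, smul_eq_mul]
    rw [le_inv_mul_iff₀ hc]
    exact h1
  calc ε ≤ g ((P.card : ℝ)⁻¹ • ∑ x ∈ P, x) := h2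
  _ ≤ |g ((P.card : ℝ)⁻¹ • ∑ x ∈ P, x)| := le_abs_self _
  _ ≤ ‖g‖ * ‖(P.card : ℝ)⁻¹ • ∑ x ∈ P, x‖ := g.le_opNorm _
  _ ≤ 1 * ‖(P.card : ℝ)⁻¹ • ∑ x ∈ P, x‖ := by
      exact mul_le_mul_of_nonneg_right hg (norm_nonneg _)
  _ = _ := one_mul _

/-- A bounded subset `A` of a real Banach space `X` is uniformly weakly null if and
only if it is uniformly Banach–Saks null: for every `ε > 0` there is `N ∈ ℕ` such that every
finite `B ⊆ A` with `|B| ≥ N` satisfies `‖|B|⁻¹ • ∑_{x ∈ B} x‖ < ε`. -/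
theorem statement2 {X : Type*} [NormedAddCommGroup X] [NormedSpace ℝ X] [CompleteSpace X]
    (A : Set X) (hA : Bornology.IsBounded A) :
    UniformlyWeaklyNull A ↔
      ∀ ε : ℝ, 0 < ε → ∃ N : ℕ, ∀ B : Finset X, ↑B ⊆ A → N ≤ B.card →
        ‖(B.card : ℝ)⁻¹ • ∑ x ∈ B, x‖ < ε := by
  constructor
  · -- forward
    intro hU ε hε
    obtain ⟨M₀, hM₀⟩ := isBounded_iff_forall_norm_le.1 hA
    set M : ℝ := max M₀ 1 with hM
    have hM1 : (1:ℝ) ≤ M := le_max_right _ _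
    have hMpos : (0:ℝ) < M := lt_of_lt_of_le one_pos hM1
    have hMx : ∀ x ∈ A, ‖x‖ ≤ M := fun x hx => (hM₀ x hx).trans (le_max_left _ _)
    obtain ⟨N, hN⟩ := hU (ε/2) (by positivity)
    refine ⟨⌈(4 * N * M) / ε⌉₊ + 1, fun B hB hcard => ?_⟩
    have hBpos : 0 < B.card := lt_of_lt_of_le (Nat.succ_pos _) hcard
    have hcB : (0:ℝ) < (B.card : ℝ) := by exact_mod_cast hBpos
    have key : ∀ f : X →L[ℝ] ℝ, ‖f‖ ≤ 1 →
        |f ((B.card : ℝ)⁻¹ • ∑ x ∈ B, x)| ≤ (N * M) / B.card + ε/2 := by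
      intro f hf
      have hsplit : ∑ x ∈ B, |f x| ≤ N * M + B.card * (ε/2) := by
        classical
        have hfil : (B.filter (fun x => ε/2 < |f x|)).card ≤ N := by
          have hsub : ((B.filter (fun x => ε/2 < |f x|) : Finset X) : Set X) ⊆
              {x ∈ A | ε/2 < |f x|} := by
            intro x hx
            simp only [Finset.coe_filter, Set.mem_setOf_eq] at hx
            exact ⟨hB hx.1, hx.2⟩
          have := (Set.encard_mono hsub).trans (hN f hf)
          rwa [Set.encard_coe_eq_coe_finsetCard, Nat.cast_le] at this
        calc ∑ x ∈ B, |f x|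
            = ∑ x ∈ B.filter (fun x => ε/2 < |f x|), |f x|
              + ∑ x ∈ B.filter (fun x => ¬ ε/2 < |f x|), |f x| :=
              (Finset.sum_filter_add_sum_filter_not B _ _).symm
          _ ≤ N * M + B.card * (ε/2) := by
              gcongr
              · calc ∑ x ∈ B.filter (fun x => ε/2 < |f x|), |f x|
                    ≤ ∑ x ∈ B.filter (fun x => ε/2 < |f x|), M := by
                      refine Finset.sum_le_sum fun x hx => ?_
                      have hxA : x ∈ A := hB (Finset.mem_filter.1 hx).1
                      calc |f x| ≤ ‖f‖ * ‖x‖ := f.le_opNorm x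
                      _ ≤ 1 * M := by
                          exact mul_le_mul hf (hMx x hxA) (norm_nonneg _) zero_le_one
                      _ = M := one_mul _
                  _ = (B.filter (fun x => ε/2 < |f x|)).card * M := by
                      rw [Finset.sum_const, nsmul_eq_mul]
                  _ ≤ N * M := by
                      exact mul_le_mul_of_nonneg_right (by exact_mod_cast hfil) hMpos.le
              · calc ∑ x ∈ B.filter (fun x => ¬ ε/2 < |f x|), |f x|
                    ≤ ∑ _x ∈ B.filter (fun x => ¬ ε/2 < |f x|), (ε/2) := by
                      refine Finset.sum_le_sum fun x hx => ?_
                      exact le_of_not_gt (Finset.mem_filter.1 hx).2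
                  _ = (B.filter (fun x => ¬ ε/2 < |f x|)).card * (ε/2) := by
                      rw [Finset.sum_const, nsmul_eq_mul]
                  _ ≤ B.card * (ε/2) := by
                      gcongr
                      exact Finset.filter_subset _ _
      calc |f ((B.card : ℝ)⁻¹ • ∑ x ∈ B, x)|
          = (B.card : ℝ)⁻¹ * |f (∑ x ∈ B, x)| := by
            rw [map_smul, smul_eq_mul, abs_mul, abs_of_nonneg (by positivity : (0:ℝ) ≤ (B.card:ℝ)⁻¹)]
        _ ≤ (B.card : ℝ)⁻¹ * (N * M + B.card * (ε/2)) := by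
            gcongr
            rw [map_sum]
            exact (Finset.abs_sum_le_sum_abs _ _).trans hsplit
        _ = (N * M) / B.card + ε/2 := by field_simp
    have hbound : ‖(B.card : ℝ)⁻¹ • ∑ x ∈ B, x‖ ≤ (N * M) / B.card + ε/2 := by
      refine NormedSpace.norm_le_dual_bound ℝ _ (by positivity) fun f => ?_
      rcases eq_or_ne f 0 with rfl | hf0
      · simp
      · have hgnorm : ‖(‖f‖⁻¹ • f : X →L[ℝ] ℝ)‖ ≤ 1 := by
          rw [norm_smul, norm_inv, norm_norm, inv_mul_cancel₀ (norm_ne_zero_iff.2 hf0)]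
        have := key (‖f‖⁻¹ • f) hgnorm
        have hfe : |(‖f‖⁻¹ • f : X →L[ℝ] ℝ) ((B.card : ℝ)⁻¹ • ∑ x ∈ B, x)|
            = ‖f‖⁻¹ * |f ((B.card : ℝ)⁻¹ • ∑ x ∈ B, x)| := by
          rw [ContinuousLinearMap.smul_apply, smul_eq_mul, abs_mul,
            abs_of_nonneg (inv_nonneg.2 (norm_nonneg f))]
        rw [hfe] at this
        have hfpos : (0:ℝ) < ‖f‖ := norm_pos_iff.2 hf0
        rw [Real.norm_eq_abs]
        calc |f ((B.card : ℝ)⁻¹ • ∑ x ∈ B, x)|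
            = ‖f‖ * (‖f‖⁻¹ * |f ((B.card : ℝ)⁻¹ • ∑ x ∈ B, x)|) := by
              field_simp
          _ ≤ ‖f‖ * ((N * M) / B.card + ε/2) := by gcongr
          _ = ((N * M) / B.card + ε/2) * ‖f‖ := mul_comm _ _
    have hsmall : (N * M : ℝ) / B.card < ε/2 := by
      have h1 : ((4 * N * M) / ε : ℝ) < (B.card : ℝ) := by
        calc ((4 * N * M) / ε : ℝ) ≤ ⌈(4 * N * M) / ε⌉₊ := Nat.le_ceil _
        _ < (B.card : ℝ) := by exact_mod_cast Nat.lt_of_lt_of_le (Nat.lt_succ_self _) hcard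
      rw [div_lt_iff₀ hcB]
      rw [div_lt_iff₀ hε] at h1
      nlinarith [hMpos, hε, Nat.cast_nonneg (α := ℝ) N]
    linarith
  · -- reverse
    intro h ε hε
    obtain ⟨N, hN⟩ := h ε hε
    refine ⟨2 * N, fun f hf => ?_⟩
    by_contra hcon
    push_neg at hcon
    have h2 : ((2 * N + 1 : ℕ) : ℕ∞) ≤ {x ∈ A | ε < |f x|}.encard := by
      exact_mod_cast Order.add_one_le_of_lt hcon
    obtain ⟨t, hts, htcard⟩ := Set.exists_subset_encard_eq h2
    have htfin : t.Finite := Set.finite_of_encard_eq_coe htcard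
    classical
    set T : Finset X := htfin.toFinset with hT
    have hTcard : T.card = 2 * N + 1 := by
      have : ((T : Set X)).encard = ((2 * N + 1 : ℕ) : ℕ∞) := by
        rw [hT, Set.Finite.coe_toFinset]; exact htcard
      rw [Set.encard_coe_eq_coe_finsetCard] at this
      exact_mod_cast this
    have hTA : ∀ x ∈ T, x ∈ A ∧ ε < |f x| := by
      intro x hx
      rw [hT, Set.Finite.mem_toFinset] at hx
      exact hts hx
    set P : Finset X := T.filter (fun x => ε < f x) with hP
    set Q : Finset X := T.filter (fun x => ε < -f x) with hQ
    have hPQ : T.card ≤ P.card + Q.card := by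
      have hsub : T ⊆ P ∪ Q := by
        intro x hx
        have hx' := (hTA x hx).2
        rcases lt_abs.1 hx' with hgt | hlt
        · exact Finset.mem_union.2 (Or.inl (Finset.mem_filter.2 ⟨hx, hgt⟩))
        · exact Finset.mem_union.2 (Or.inr (Finset.mem_filter.2 ⟨hx, hlt⟩))
      exact le_trans (Finset.card_le_card hsub) (Finset.card_union_le _ _)
    have hmain : ∀ (g : X →L[ℝ] ℝ), ‖g‖ ≤ 1 → ∀ (P' : Finset X), ↑P' ⊆ A →
        (∀ x ∈ P', ε < g x) → N ≤ P'.card → P'.Nonempty → False := by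
      intro g hg P' hP'A hP'g hP'card hP'ne
      have h1 := hN P' hP'A hP'card
      have h2 := aux_avg_lb g hg P' hP'ne hP'g
      linarith
    have hcases : N + 1 ≤ P.card ∨ N + 1 ≤ Q.card := by
      by_contra hc
      push_neg at hc
      omega
    rcases hcases with hPc | hQc
    · refine hmain f hf P ?_ ?_ (by omega) (Finset.card_pos.1 (by omega))
      · intro x hx
        exact (hTA x (Finset.mem_filter.1 (Finset.mem_coe.1 hx)).1).1
      · intro x hx
        exact (Finset.mem_filter.1 hx).2
    · refine hmain (-f) (by rwa [norm_neg]) Q ?_ ?_ (by omega) (Finset.card_pos.1 (by omega))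
      · intro x hx
        exact (hTA x (Finset.mem_filter.1 (Finset.mem_coe.1 hx)).1).1
      · intro x hx
        have := (Finset.mem_filter.1 hx).2
        simpa using this
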